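/- Let (X, δ_X) and (Y, δ_Y) be Polish diversities (separable and complete induced metric spaces), both having the extension property. Then (X, δ_X) and (Y, δ_Y) are isomorphic: there is a bijection φ : X → Y with δ_Y(φ(A)) = δ_X(A) for all finite A ⊆ X. -/

import Mathlib

open scoped Classical

/-- A diversity on `X`: a real-valued function on finite subsets satisfying
(D1) nonnegativity with `δ A = 0 ↔ |A| ≤ 1`, and (D2) the triangle inequality. -/
structure Diversity (X : Type*) where
  δ : Finset X → ℝ
  nonneg : ∀ A : Finset X, 0 ≤ δ A
  eq_zero_iff : ∀ A : Finset X, δ A = 0 ↔ A.card ≤ 1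
  triangle : ∀ A B C : Finset X, B.Nonempty → δ (A ∪ C) ≤ δ (A ∪ B) + δ (B ∪ C)

/-- An admissible function on a diversity (a one-point extension). -/
structure IsAdmissible {X : Type*} (D : Diversity X) (f : Finset X → ℝ) : Prop where
  empty : f ∅ = 0
  le : ∀ A : Finset X, D.δ A ≤ f A
  tri : ∀ A B C : Finset X, C.Nonempty → f (A ∪ B) ≤ f (A ∪ C) + D.δ (B ∪ C)
  subadd : ∀ A B : Finset X, f (A ∪ B) ≤ f A + f B

/-- Restriction of a diversity to a subset. -/
noncomputable def Diversity.restrict {X : Type*} (D : Diversity X) (S : Set X) : Diversity S where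
  δ A := D.δ (A.image Subtype.val)
  nonneg A := D.nonneg _
  eq_zero_iff A := by
    rw [D.eq_zero_iff, Finset.card_image_of_injective _ Subtype.val_injective]
  triangle A B C hB := by
    have h := D.triangle (A.image Subtype.val) (B.image Subtype.val) (C.image Subtype.val)
      (hB.image _)
    simpa [Finset.image_union] using h

/-- Separability of the induced metric `d a b = δ {a, b}`. -/
def Diversity.SeparableD {X : Type*} (D : Diversity X) : Prop :=
  ∃ s : Set X, s.Countable ∧ ∀ x : X, ∀ ε : ℝ, 0 < ε → ∃ y ∈ s, D.δ {x, y} < ε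

/-- Completeness of the induced metric `d a b = δ {a, b}`. -/
def Diversity.CompleteD {X : Type*} (D : Diversity X) : Prop :=
  ∀ u : ℕ → X, (∀ ε : ℝ, 0 < ε → ∃ N : ℕ, ∀ m ≥ N, ∀ n ≥ N, D.δ {u m, u n} < ε) →
    ∃ x : X, ∀ ε : ℝ, 0 < ε → ∃ N : ℕ, ∀ n ≥ N, D.δ {u n, x} < ε

/-- The diversity `δ̂` on (finite sets of) admissible functions. -/
noncomputable def hatδ {X : Type*} (F : Finset (Finset X → ℝ)) : ℝ :=
  if F.card ≤ 1 then 0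
  else sSup { r : ℝ | ∃ j ∈ F, ∃ A : (Finset X → ℝ) → Finset X,
    r = j ((F.erase j).biUnion A) - ∑ i ∈ F.erase j, i (A i) }

/-- The canonical maximal extension `f_S^X` of an admissible function on `S ⊆ X`. -/
noncomputable def extFun {X : Type*} (D : Diversity X) (S : Set X) (f : Finset S → ℝ)
    (A : Finset X) : ℝ :=
  sInf { r : ℝ | ∃ (B : Finset S) (As : S → Finset X),
    B.biUnion As = A ∧ r = f B + ∑ b ∈ B, D.δ (insert (b : X) (As b)) }

/-- An admissible function is finitely supported if it is the canonical extension
of an admissible function on some finite nonempty `S ⊆ X`. -/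
def FinitelySupported {X : Type*} (D : Diversity X) (f : Finset X → ℝ) : Prop :=
  ∃ S : Set X, S.Finite ∧ S.Nonempty ∧ ∃ g : Finset S → ℝ,
    IsAdmissible (D.restrict S) g ∧ f = extFun D S g

/-- The extension property for a diversity. -/
def Diversity.ExtensionProp {X : Type*} (D : Diversity X) : Prop :=
  ∀ F : Finset X, ∀ f : Finset ((F : Set X)) → ℝ,
    IsAdmissible (D.restrict (F : Set X)) f →
    ∃ x : X, ∀ A : Finset ((F : Set X)), D.δ (insert x (A.image Subtype.val)) = f A

/-- The approximate extension property for a diversity. -/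
def Diversity.ApproxExtensionProp {X : Type*} (D : Diversity X) : Prop :=
  ∀ F : Finset X, ∀ f : Finset ((F : Set X)) → ℝ,
    IsAdmissible (D.restrict (F : Set X)) f →
    ∀ ε : ℝ, 0 < ε →
      ∃ x : X, ∀ A : Finset ((F : Set X)), |D.δ (insert x (A.image Subtype.val)) - f A| ≤ ε

/-- Ultrahomogeneity: isomorphisms between finite subsets extend to automorphisms. -/
def Diversity.Ultrahomogeneous {X : Type*} (D : Diversity X) : Prop :=
  ∀ (A A' : Finset X) (φ : ((A : Set X)) → ((A' : Set X))), Function.Bijective φ →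
    (∀ B : Finset ((A : Set X)),
      D.δ (B.image (fun b => (φ b : X))) = D.δ (B.image Subtype.val)) →
    ∃ Φ : X → X, Function.Bijective Φ ∧ (∀ C : Finset X, D.δ (C.image Φ) = D.δ C) ∧
      ∀ a : ((A : Set X)), Φ a = (φ a : X)
namespace AuxDiv

variable {X Y : Type*}

lemma div_empty (D : Diversity X) : D.δ ∅ = 0 := (D.eq_zero_iff ∅).2 (by simp)

lemma div_singleton (D : Diversity X) (x : X) : D.δ {x} = 0 :=
  (D.eq_zero_iff {x}).2 (by simp)

lemma div_insert_le (D : Diversity X) (A : Finset X) (x : X) :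
    D.δ A ≤ D.δ (insert x A) := by
  have h := D.triangle A {x} ∅ ⟨x, by simp⟩
  have e : A ∪ {x} = insert x A := by rw [Finset.union_comm, ← Finset.insert_eq]
  rw [Finset.union_empty, e, Finset.union_empty, div_singleton, add_zero] at h
  exact h

lemma div_mono (D : Diversity X) {A B : Finset X} (h : A ⊆ B) : D.δ A ≤ D.δ B := by
  classical
  have key : ∀ C : Finset X, D.δ A ≤ D.δ (A ∪ C) := by
    intro C
    induction C using Finset.induction_on with
    | empty => simp
    | insert c C hx ih =>
      calc D.δ A ≤ D.δ (A ∪ C) := ih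
        _ ≤ D.δ (insert c (A ∪ C)) := div_insert_le D _ c
        _ = D.δ (A ∪ insert c C) := by rw [Finset.union_insert]
  have := key B
  rwa [Finset.union_eq_right.2 h] at this

lemma pair_eq_zero (D : Diversity X) {x y : X} : D.δ {x, y} = 0 ↔ x = y := by
  rw [D.eq_zero_iff]
  constructor
  · intro h
    by_contra hne
    rw [Finset.card_pair hne] at h; omega
  · rintro rfl; simp

lemma tri3 (D : Diversity X) (p q r : X) : D.δ {p, r} ≤ D.δ {p, q} + D.δ {q, r} := by
  have h := D.triangle {p} {q} {r} ⟨q, by simp⟩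
  rw [← Finset.insert_eq, ← Finset.insert_eq, ← Finset.insert_eq] at h
  exact h

lemma pair_comm (D : Diversity X) (p q : X) : D.δ {p, q} = D.δ {q, p} := by
  rw [Finset.pair_comm]

lemma insert_lip (D : Diversity X) (x x' : X) (S : Finset X) :
    D.δ (insert x S) ≤ D.δ (insert x' S) + D.δ {x, x'} := by
  have h := D.triangle S {x'} {x} ⟨x', by simp⟩
  calc D.δ (insert x S) = D.δ (S ∪ {x}) := by rw [Finset.union_comm, ← Finset.insert_eq]
    _ ≤ D.δ (S ∪ {x'}) + D.δ ({x'} ∪ {x}) := h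
    _ = D.δ (insert x' S) + D.δ {x, x'} := by
        rw [Finset.union_comm S, ← Finset.insert_eq, Finset.union_comm, ← Finset.insert_eq,
          Finset.pair_comm]

lemma abs_insert (D : Diversity X) (x x' : X) (S : Finset X) :
    |D.δ (insert x S) - D.δ (insert x' S)| ≤ D.δ {x, x'} := by
  rw [abs_sub_le_iff]
  constructor
  · linarith [insert_lip D x x' S]
  · linarith [insert_lip D x' x S, pair_comm D x x']

end AuxDiv
namespace AuxDiv

lemma step_exists (DX : Diversity X) (DY : Diversity Y) (hYe : DY.ExtensionProp)
    {n : ℕ} (p : Fin n → X) (q : Fin n → Y)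
    (hpq : ∀ A : Finset (Fin n), DY.δ (A.image q) = DX.δ (A.image p)) (x : X) :
    ∃ y : Y, ∀ A : Finset (Fin n),
      DY.δ (insert y (A.image q)) = DX.δ (insert x (A.image p)) := by
  classical
  set F : Finset Y := Finset.univ.image q with hF
  have hmemF : ∀ i : Fin n, q i ∈ (F : Set Y) := fun i =>
    Finset.mem_coe.mpr (Finset.mem_image_of_mem q (Finset.mem_univ i))
  set I : Finset ((F : Set Y)) → Finset (Fin n) :=
    fun B => Finset.univ.filter (fun i => q i ∈ B.image Subtype.val) with hI
  have hmemI : ∀ (B : Finset ((F : Set Y))) (i : Fin n),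
      i ∈ I B ↔ q i ∈ B.image Subtype.val := by
    intro B i
    simp only [hI, Finset.mem_filter, Finset.mem_univ, true_and]
  have hsame : ∀ i j : Fin n, q i = q j → p i = p j := by
    intro i j hqij
    have h := hpq {i, j}
    have h1 : ({i, j} : Finset (Fin n)).image q = {q i, q j} := by simp
    have h2 : ({i, j} : Finset (Fin n)).image p = {p i, p j} := by simp
    rw [h1, h2] at h
    have : DY.δ {q i, q j} = 0 := by rw [pair_eq_zero]; exact hqij
    exact (pair_eq_zero DX).1 (by rw [← h, this])
  have hIq : ∀ B : Finset ((F : Set Y)), (I B).image q = B.image Subtype.val := by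
    intro B
    ext z
    constructor
    · intro hz
      obtain ⟨i, hi, rfl⟩ := Finset.mem_image.mp hz
      exact (hmemI B i).1 hi
    · intro hz
      obtain ⟨w, hw, rfl⟩ := Finset.mem_image.mp hz
      have hwF : (w : Y) ∈ F := Finset.mem_coe.mp w.2
      obtain ⟨i, -, hiw⟩ := Finset.mem_image.mp hwF
      refine Finset.mem_image.mpr ⟨i, ?_, hiw⟩
      exact (hmemI B i).2 (by rw [hiw]; exact hz)
  have hIunion : ∀ (inst : DecidableEq ((F : Set Y))) (B C : Finset ((F : Set Y))),
      I (@Union.union _ (@Finset.instUnion _ inst) B C) = I B ∪ I C := by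
    intro inst B C
    ext i
    rw [Finset.mem_union, hmemI, hmemI, hmemI, Finset.image_union, Finset.mem_union]
  have hIne : ∀ B : Finset ((F : Set Y)), B.Nonempty → (I B).Nonempty := by
    intro B hB
    have : ((I B).image q).Nonempty := by rw [hIq]; exact hB.image _
    exact Finset.image_nonempty.mp this
  set f : Finset ((F : Set Y)) → ℝ := fun B => DX.δ (insert x ((I B).image p)) with hf
  have hfB : ∀ B, f B = DX.δ (insert x ((I B).image p)) := fun B => by simp only [hf]
  have hrestr : ∀ B : Finset ((F : Set Y)),
      (DY.restrict (F : Set Y)).δ B = DX.δ ((I B).image p) := by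
    intro B
    show DY.δ (B.image Subtype.val) = _
    rw [← hIq B, hpq]
  have hadm : IsAdmissible (DY.restrict (F : Set Y)) f := by
    constructor
    · rw [hfB]
      have hIe : I (∅ : Finset ((F : Set Y))) = ∅ := by
        ext i; rw [hmemI]; simp
      rw [hIe]
      simpa using div_singleton DX x
    · intro B
      rw [hfB, hrestr]
      exact div_mono DX (Finset.subset_insert _ _)
    · intro A B C hC
      rw [hfB, hfB, hrestr, hIunion _ A B, hIunion _ A C, hIunion _ B C,
        Finset.image_union, Finset.image_union, Finset.image_union]
      have htri := DX.triangle (insert x ((I A).image p)) ((I C).image p) ((I B).image p)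
        ((hIne C hC).image p)
      calc DX.δ (insert x ((I A).image p ∪ (I B).image p))
          = DX.δ (insert x ((I A).image p) ∪ (I B).image p) := by
            rw [Finset.insert_union]
        _ ≤ DX.δ (insert x ((I A).image p) ∪ (I C).image p)
            + DX.δ ((I C).image p ∪ (I B).image p) := htri
        _ = DX.δ (insert x ((I A).image p ∪ (I C).image p))
            + DX.δ ((I B).image p ∪ (I C).image p) := by
            rw [Finset.insert_union, Finset.union_comm ((I C).image p)]
    · intro A B
      rw [hfB, hfB, hfB, hIunion _ A B, Finset.image_union]
      set SA := (I A).image p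
      set SB := (I B).image p
      have htri := DX.triangle (insert x SA) {x} (insert x SB) ⟨x, by simp⟩
      have e1 : insert x SA ∪ {x} = insert x SA := by
        rw [Finset.union_eq_left]; simp
      have e2 : ({x} : Finset X) ∪ insert x SB = insert x SB := by
        rw [Finset.union_eq_right]; simp
      have e3 : insert x SA ∪ insert x SB = insert x (SA ∪ SB) := by
        rw [Finset.insert_union, Finset.union_insert, Finset.insert_idem]
      rw [e1, e2, e3] at htri
      exact htri
  obtain ⟨y, hy⟩ := hYe F f hadm
  refine ⟨y, fun A => ?_⟩
  set BA : Finset ((F : Set Y)) := A.image (fun i => (⟨q i, hmemF i⟩ : ((F : Set Y)))) with hBA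
  have hBAval : BA.image Subtype.val = A.image q := by
    rw [hBA, Finset.image_image]; rfl
  have hIBA : (I BA).image p = A.image p := by
    apply Finset.Subset.antisymm
    · intro z hz
      obtain ⟨i, hi, rfl⟩ := Finset.mem_image.mp hz
      have : q i ∈ A.image q := by rw [← hBAval]; exact (hmemI BA i).1 hi
      obtain ⟨j, hj, hji⟩ := Finset.mem_image.mp this
      rw [← hsame j i hji]
      exact Finset.mem_image_of_mem p hj
    · intro z hz
      obtain ⟨i, hi, rfl⟩ := Finset.mem_image.mp hz
      refine Finset.mem_image_of_mem p ((hmemI BA i).2 ?_)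
      rw [hBAval]
      exact Finset.mem_image_of_mem q hi
  have h := hy BA
  rw [hBAval] at h
  rw [h, hfB, hIBA]

end AuxDiv
namespace AuxDiv

lemma image_snoc {Z : Type*} [DecidableEq Z] {n : ℕ} (A : Finset (Fin (n + 1)))
    (g : Fin n → Z) (z : Z) :
    A.image (Fin.snoc g z)
      = (if Fin.last n ∈ A then
          insert z ((Finset.univ.filter (fun i : Fin n => i.castSucc ∈ A)).image g)
        else (Finset.univ.filter (fun i : Fin n => i.castSucc ∈ A)).image g) := by
  classical
  set B : Finset (Fin n) := Finset.univ.filter (fun i : Fin n => i.castSucc ∈ A) with hB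
  have hmemB : ∀ i : Fin n, i ∈ B ↔ i.castSucc ∈ A := by
    intro i; simp only [hB, Finset.mem_filter, Finset.mem_univ, true_and]
  ext w
  constructor
  · intro hw
    obtain ⟨i, hi, rfl⟩ := Finset.mem_image.mp hw
    induction i using Fin.lastCases with
    | last =>
      rw [if_pos hi, Fin.snoc_last]
      exact Finset.mem_insert_self _ _
    | cast j =>
      have hj : j ∈ B := (hmemB j).2 hi
      simp only [Fin.snoc_castSucc]
      by_cases hl : Fin.last n ∈ A
      · rw [if_pos hl]; exact Finset.mem_insert_of_mem (Finset.mem_image_of_mem g hj)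
      · rw [if_neg hl]; exact Finset.mem_image_of_mem g hj
  · intro hw
    by_cases hl : Fin.last n ∈ A
    · rw [if_pos hl] at hw
      rcases Finset.mem_insert.mp hw with h | h
      · subst h
        exact Finset.mem_image.mpr ⟨Fin.last n, hl, Fin.snoc_last _ _⟩
      · obtain ⟨j, hj, rfl⟩ := Finset.mem_image.mp h
        exact Finset.mem_image.mpr ⟨j.castSucc, (hmemB j).1 hj, by simp⟩
    · rw [if_neg hl] at hw
      obtain ⟨j, hj, rfl⟩ := Finset.mem_image.mp hw
      exact Finset.mem_image.mpr ⟨j.castSucc, (hmemB j).1 hj, by simp⟩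

lemma snoc_inv {n : ℕ} (DX : Diversity X) (DY : Diversity Y)
    {p : Fin n → X} {q : Fin n → Y} {x : X} {y : Y}
    (h1 : ∀ A : Finset (Fin n), DY.δ (A.image q) = DX.δ (A.image p))
    (h2 : ∀ A : Finset (Fin n), DY.δ (insert y (A.image q)) = DX.δ (insert x (A.image p))) :
    ∀ A : Finset (Fin (n + 1)),
      DY.δ (A.image (Fin.snoc q y)) = DX.δ (A.image (Fin.snoc p x)) := by
  intro A
  rw [image_snoc A q y, image_snoc A p x]
  by_cases hl : Fin.last n ∈ A
  · rw [if_pos hl, if_pos hl]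
    exact h2 (Finset.univ.filter (fun i : Fin n => i.castSucc ∈ A))
  · rw [if_neg hl, if_neg hl]
    exact h1 (Finset.univ.filter (fun i : Fin n => i.castSucc ∈ A))

/-- The type of matched pairs of n-tuples. -/
abbrev Pn (DX : Diversity X) (DY : Diversity Y) (n : ℕ) :=
  {pq : (Fin n → X) × (Fin n → Y) //
    ∀ A : Finset (Fin n), DY.δ (A.image pq.2) = DX.δ (A.image pq.1)}

variable (DX : Diversity X) (DY : Diversity Y)

/-- Abbreviation for the two one-point-extension existence hypotheses. -/
def HypY : Prop := ∀ (n : ℕ) (p : Fin n → X) (q : Fin n → Y),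
  (∀ A : Finset (Fin n), DY.δ (A.image q) = DX.δ (A.image p)) → ∀ x : X,
    ∃ y : Y, ∀ A : Finset (Fin n),
      DY.δ (insert y (A.image q)) = DX.δ (insert x (A.image p))

noncomputable def pick (hY : HypY DX DY) (hX : HypY DY DX) (u : ℕ → X) (v : ℕ → Y)
    (n : ℕ) (pq : Pn DX DY n) : X × Y :=
  if h : Even n then
    (u (n / 2), (hY n pq.1.1 pq.1.2 pq.2 (u (n / 2))).choose)
  else
    ((hX n pq.1.2 pq.1.1 (fun A => (pq.2 A).symm) (v (n / 2))).choose, v (n / 2))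

lemma pick_spec (hY : HypY DX DY) (hX : HypY DY DX) (u : ℕ → X) (v : ℕ → Y)
    (n : ℕ) (pq : Pn DX DY n) :
    ∀ A : Finset (Fin n),
      DY.δ (insert (pick DX DY hY hX u v n pq).2 (A.image pq.1.2))
        = DX.δ (insert (pick DX DY hY hX u v n pq).1 (A.image pq.1.1)) := by
  intro A
  by_cases h : Even n
  · simp only [pick, dif_pos h]
    exact (hY n pq.1.1 pq.1.2 pq.2 (u (n / 2))).choose_spec A
  · simp only [pick, dif_neg h]
    exact ((hX n pq.1.2 pq.1.1 (fun A => (pq.2 A).symm) (v (n / 2))).choose_spec A).symm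

lemma pick_even (hY : HypY DX DY) (hX : HypY DY DX) (u : ℕ → X) (v : ℕ → Y)
    (n : ℕ) (pq : Pn DX DY n) (h : Even n) :
    (pick DX DY hY hX u v n pq).1 = u (n / 2) := by
  simp only [pick, dif_pos h]

lemma pick_odd (hY : HypY DX DY) (hX : HypY DY DX) (u : ℕ → X) (v : ℕ → Y)
    (n : ℕ) (pq : Pn DX DY n) (h : ¬ Even n) :
    (pick DX DY hY hX u v n pq).2 = v (n / 2) := by
  simp only [pick, dif_neg h]

noncomputable def seqD (hY : HypY DX DY) (hX : HypY DY DX) (u : ℕ → X) (v : ℕ → Y) :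
    (n : ℕ) → Pn DX DY n
  | 0 => ⟨(Fin.elim0, Fin.elim0), by
      intro A
      have hA : A = ∅ := Finset.eq_empty_of_isEmpty A
      subst hA
      rw [Finset.image_empty, Finset.image_empty, div_empty, div_empty]⟩
  | n + 1 =>
    let pq := seqD hY hX u v n
    let xy := pick DX DY hY hX u v n pq
    ⟨(Fin.snoc pq.1.1 xy.1, Fin.snoc pq.1.2 xy.2),
      snoc_inv DX DY pq.2 (pick_spec DX DY hY hX u v n pq)⟩

lemma seqD_succ_fst (hY : HypY DX DY) (hX : HypY DY DX) (u : ℕ → X) (v : ℕ → Y) (n : ℕ) :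
    (seqD DX DY hY hX u v (n + 1)).1.1
      = Fin.snoc (seqD DX DY hY hX u v n).1.1
          (pick DX DY hY hX u v n (seqD DX DY hY hX u v n)).1 := rfl

lemma seqD_succ_snd (hY : HypY DX DY) (hX : HypY DY DX) (u : ℕ → X) (v : ℕ → Y) (n : ℕ) :
    (seqD DX DY hY hX u v (n + 1)).1.2
      = Fin.snoc (seqD DX DY hY hX u v n).1.2
          (pick DX DY hY hX u v n (seqD DX DY hY hX u v n)).2 := rfl

end AuxDiv
namespace AuxDiv

variable {X Y : Type*} (DX : Diversity X) (DY : Diversity Y)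

noncomputable def aD (hY : HypY DX DY) (hX : HypY DY DX) (u : ℕ → X) (v : ℕ → Y) (n : ℕ) : X :=
  (seqD DX DY hY hX u v (n + 1)).1.1 (Fin.last n)

noncomputable def bD (hY : HypY DX DY) (hX : HypY DY DX) (u : ℕ → X) (v : ℕ → Y) (n : ℕ) : Y :=
  (seqD DX DY hY hX u v (n + 1)).1.2 (Fin.last n)

lemma seqD_fst_eq (hY : HypY DX DY) (hX : HypY DY DX) (u : ℕ → X) (v : ℕ → Y) :
    ∀ (n : ℕ) (i : Fin n), (seqD DX DY hY hX u v n).1.1 i = aD DX DY hY hX u v i.1 := by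
  intro n
  induction n with
  | zero => exact fun i => i.elim0
  | succ n ih =>
    intro i
    induction i using Fin.lastCases with
    | last => rfl
    | cast j =>
      rw [seqD_succ_fst]
      simp only [Fin.snoc_castSucc, Fin.coe_castSucc]
      exact ih j

lemma seqD_snd_eq (hY : HypY DX DY) (hX : HypY DY DX) (u : ℕ → X) (v : ℕ → Y) :
    ∀ (n : ℕ) (i : Fin n), (seqD DX DY hY hX u v n).1.2 i = bD DX DY hY hX u v i.1 := by
  intro n
  induction n with
  | zero => exact fun i => i.elim0
  | succ n ih =>
    intro i
    induction i using Fin.lastCases with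
    | last => rfl
    | cast j =>
      rw [seqD_succ_snd]
      simp only [Fin.snoc_castSucc, Fin.coe_castSucc]
      exact ih j

lemma aD_even (hY : HypY DX DY) (hX : HypY DY DX) (u : ℕ → X) (v : ℕ → Y) (k : ℕ) :
    aD DX DY hY hX u v (2 * k) = u k := by
  show (seqD DX DY hY hX u v (2 * k + 1)).1.1 (Fin.last (2 * k)) = u k
  rw [seqD_succ_fst]
  rw [Fin.snoc_last]
  rw [pick_even DX DY hY hX u v (2 * k) _ ⟨k, by ring⟩]
  congr 1
  omega

lemma bD_odd (hY : HypY DX DY) (hX : HypY DY DX) (u : ℕ → X) (v : ℕ → Y) (k : ℕ) :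
    bD DX DY hY hX u v (2 * k + 1) = v k := by
  show (seqD DX DY hY hX u v (2 * k + 1 + 1)).1.2 (Fin.last (2 * k + 1)) = v k
  rw [seqD_succ_snd, Fin.snoc_last]
  rw [pick_odd DX DY hY hX u v (2 * k + 1) _ (by simp [Nat.even_iff, Nat.add_mod])]
  congr 1
  omega

lemma inv_nat (hY : HypY DX DY) (hX : HypY DY DX) (u : ℕ → X) (v : ℕ → Y)
    (A : Finset ℕ) :
    DY.δ (A.image (bD DX DY hY hX u v)) = DX.δ (A.image (aD DX DY hY hX u v)) := by
  classical
  set n := A.sup id + 1 with hn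
  have hlt : ∀ m ∈ A, m < n := fun m hm =>
    Nat.lt_succ_of_le (Finset.le_sup (f := id) hm)
  set A' := A.attachFin hlt with hA'
  have h := (seqD DX DY hY hX u v n).2 A'
  have e1 : A'.image (seqD DX DY hY hX u v n).1.1 = A.image (aD DX DY hY hX u v) := by
    ext z
    constructor
    · intro hz
      obtain ⟨i, hi, rfl⟩ := Finset.mem_image.mp hz
      rw [seqD_fst_eq]
      exact Finset.mem_image_of_mem _ ((Finset.mem_attachFin hlt).1 hi)
    · intro hz
      obtain ⟨m, hm, rfl⟩ := Finset.mem_image.mp hz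
      refine Finset.mem_image.mpr ⟨⟨m, hlt m hm⟩, (Finset.mem_attachFin hlt).2 hm, ?_⟩
      rw [seqD_fst_eq]
  have e2 : A'.image (seqD DX DY hY hX u v n).1.2 = A.image (bD DX DY hY hX u v) := by
    ext z
    constructor
    · intro hz
      obtain ⟨i, hi, rfl⟩ := Finset.mem_image.mp hz
      rw [seqD_snd_eq]
      exact Finset.mem_image_of_mem _ ((Finset.mem_attachFin hlt).1 hi)
    · intro hz
      obtain ⟨m, hm, rfl⟩ := Finset.mem_image.mp hz
      refine Finset.mem_image.mpr ⟨⟨m, hlt m hm⟩, (Finset.mem_attachFin hlt).2 hm, ?_⟩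
      rw [seqD_snd_eq]
  rw [e1, e2] at h
  exact h

end AuxDiv
namespace AuxDiv

variable {X Y : Type*}

lemma image_univ_succ {Z : Type*} [DecidableEq Z] {n : ℕ} (s : Fin (n + 1) → Z) :
    Finset.univ.image s
      = insert (s (Fin.last n)) (Finset.univ.image (fun j : Fin n => s j.castSucc)) := by
  ext z
  constructor
  · intro hz
    obtain ⟨i, -, rfl⟩ := Finset.mem_image.mp hz
    induction i using Fin.lastCases with
    | last => exact Finset.mem_insert_self _ _
    | cast j =>
      exact Finset.mem_insert_of_mem
        (Finset.mem_image.mpr ⟨j, Finset.mem_univ j, rfl⟩)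
  · intro hz
    rcases Finset.mem_insert.mp hz with h | h
    · subst h; exact Finset.mem_image_of_mem s (Finset.mem_univ _)
    · obtain ⟨j, -, rfl⟩ := Finset.mem_image.mp h
      exact Finset.mem_image_of_mem s (Finset.mem_univ _)

lemma perturb (D : Diversity X) :
    ∀ (n : ℕ) (s t : Fin n → X) (C : Finset X) (ε : ℝ),
      (∀ i, D.δ {s i, t i} ≤ ε) →
      |D.δ (C ∪ Finset.univ.image s) - D.δ (C ∪ Finset.univ.image t)| ≤ n * ε := by
  intro n
  induction n with
  | zero =>
    intro s t C ε _
    simp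
  | succ n ih =>
    intro s t C ε hst
    classical
    rw [image_univ_succ s, image_univ_succ t]
    set S' := Finset.univ.image (fun j : Fin n => s j.castSucc) with hS'
    set T' := Finset.univ.image (fun j : Fin n => t j.castSucc) with hT'
    rw [Finset.union_insert, Finset.union_insert]
    have hA : |D.δ (insert (s (Fin.last n)) (C ∪ S'))
        - D.δ (insert (t (Fin.last n)) (C ∪ S'))| ≤ ε :=
      le_trans (abs_insert D _ _ _) (hst (Fin.last n))
    have hB : |D.δ (insert (t (Fin.last n)) (C ∪ S'))
        - D.δ (insert (t (Fin.last n)) (C ∪ T'))| ≤ n * ε := by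
      have e1 : insert (t (Fin.last n)) (C ∪ S') = insert (t (Fin.last n)) C ∪ S' := by
        rw [Finset.insert_union]
      have e2 : insert (t (Fin.last n)) (C ∪ T') = insert (t (Fin.last n)) C ∪ T' := by
        rw [Finset.insert_union]
      rw [e1, e2, hS', hT']
      exact ih (fun j => s j.castSucc) (fun j => t j.castSucc)
        (insert (t (Fin.last n)) C) ε (fun j => hst j.castSucc)
    calc |D.δ (insert (s (Fin.last n)) (C ∪ S'))
        - D.δ (insert (t (Fin.last n)) (C ∪ T'))|
        ≤ |D.δ (insert (s (Fin.last n)) (C ∪ S'))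
            - D.δ (insert (t (Fin.last n)) (C ∪ S'))|
          + |D.δ (insert (t (Fin.last n)) (C ∪ S'))
            - D.δ (insert (t (Fin.last n)) (C ∪ T'))| := abs_sub_le _ _ _
      _ ≤ ε + n * ε := add_le_add hA hB
      _ = (n + 1 : ℕ) * ε := by push_cast; ring

lemma exists_map (DX : Diversity X) (DY : Diversity Y) (hYc : DY.CompleteD)
    (a : ℕ → X) (b : ℕ → Y)
    (hpair : ∀ m n : ℕ, DY.δ {b m, b n} = DX.δ {a m, a n})
    (hdense : ∀ x : X, ∀ ε : ℝ, 0 < ε → ∃ m, DX.δ {x, a m} < ε) :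
    ∃ φ : X → Y, ∀ (x : X) (m : ℕ), DY.δ {φ x, b m} ≤ DX.δ {x, a m} := by
  have H : ∀ x : X, ∃ y : Y, ∀ m : ℕ, DY.δ {y, b m} ≤ DX.δ {x, a m} := by
    intro x
    have hsel : ∀ k : ℕ, ∃ m, DX.δ {x, a m} < 1 / ((k : ℝ) + 1) := fun k =>
      hdense x (1 / ((k : ℝ) + 1)) (by positivity)
    choose g hg using hsel
    have hfrac : ∀ (ε : ℝ), 0 < ε → ∀ (N : ℕ), 2 / ε < (N : ℝ) →
        ∀ k : ℕ, N ≤ k → 1 / ((k : ℝ) + 1) < ε / 2 := by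
      intro ε hε N hN k hk
      rw [div_lt_iff₀ hε] at hN
      rw [div_lt_iff₀ (by positivity)]
      have hk' : (N : ℝ) ≤ (k : ℝ) := Nat.cast_le.mpr hk
      nlinarith
    have hcauchy : ∀ ε : ℝ, 0 < ε → ∃ N : ℕ, ∀ j ≥ N, ∀ k ≥ N,
        DY.δ {b (g j), b (g k)} < ε := by
      intro ε hε
      obtain ⟨N, hN⟩ := exists_nat_gt (2 / ε)
      refine ⟨N, fun j hj k hk => ?_⟩
      rw [hpair]
      have h1 : DX.δ {a (g j), a (g k)} ≤ DX.δ {a (g j), x} + DX.δ {x, a (g k)} :=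
        tri3 DX _ _ _
      have h2 : DX.δ {a (g j), x} < ε / 2 := by
        rw [pair_comm]
        exact lt_trans (hg j) (hfrac ε hε N hN j hj)
      have h3 : DX.δ {x, a (g k)} < ε / 2 :=
        lt_trans (hg k) (hfrac ε hε N hN k hk)
      linarith
    obtain ⟨y, hy⟩ := hYc (fun k => b (g k)) hcauchy
    refine ⟨y, fun m => ?_⟩
    refine le_of_forall_pos_le_add (fun ε hε => ?_)
    obtain ⟨N1, hN1⟩ := hy (ε / 2) (by positivity)
    obtain ⟨N2, hN2⟩ := exists_nat_gt (2 / ε)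
    set k := max N1 N2 with hk
    have h1 : DY.δ {b (g k), y} < ε / 2 := hN1 k (le_max_left _ _)
    have h2 : DX.δ {x, a (g k)} < ε / 2 :=
      lt_trans (hg k) (hfrac ε hε N2 hN2 k (le_max_right _ _))
    calc DY.δ {y, b m} ≤ DY.δ {y, b (g k)} + DY.δ {b (g k), b m} := tri3 DY _ _ _
      _ = DY.δ {y, b (g k)} + DX.δ {a (g k), a m} := by rw [hpair]
      _ ≤ DY.δ {y, b (g k)} + (DX.δ {a (g k), x} + DX.δ {x, a m}) := by
          have := tri3 DX (a (g k)) x (a m); linarith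
      _ ≤ ε / 2 + (ε / 2 + DX.δ {x, a m}) := by
          rw [pair_comm DY y (b (g k)), pair_comm DX (a (g k)) x]
          have := h1; have := h2; linarith
      _ = DX.δ {x, a m} + ε := by ring
  choose φ hφ using H
  exact ⟨φ, hφ⟩

end AuxDiv
namespace AuxDiv

lemma nonempty_of_ext {X : Type*} (DX : Diversity X) (hXe : DX.ExtensionProp) :
    Nonempty X := by
  classical
  have hadm : IsAdmissible (DX.restrict ((∅ : Finset X) : Set X)) (fun _ => 0) := by
    constructor
    · rfl
    · intro A
      have hA : A = ∅ := Finset.eq_empty_iff_forall_notMem.mpr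
        (fun a _ => absurd (Finset.mem_coe.mp a.2) (Finset.notMem_empty a.1))
      subst hA
      simp [div_empty]
    · intro A B C _
      exact le_add_of_nonneg_right ((DX.restrict ((∅ : Finset X) : Set X)).nonneg _)
    · intro A B; norm_num
  obtain ⟨x, -⟩ := hXe ∅ (fun _ => 0) hadm
  exact ⟨x⟩

lemma dense_seq {X : Type*} (DX : Diversity X) (hXs : DX.SeparableD) (hne : Nonempty X) :
    ∃ u : ℕ → X, ∀ x : X, ∀ ε : ℝ, 0 < ε → ∃ k, DX.δ {x, u k} < ε := by
  obtain ⟨s, hsc, hsd⟩ := hXs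
  obtain ⟨x0⟩ := hne
  obtain ⟨y0, hy0, -⟩ := hsd x0 1 one_pos
  obtain ⟨u, hu⟩ := Set.Countable.exists_eq_range hsc ⟨y0, hy0⟩
  refine ⟨u, fun x ε hε => ?_⟩
  obtain ⟨y, hy, hyd⟩ := hsd x ε hε
  rw [hu] at hy
  obtain ⟨k, rfl⟩ := hy
  exact ⟨k, hyd⟩

end AuxDiv

/-- Any two Polish diversities with the extension property are isomorphic. -/
theorem stmt10 {X Y : Type*} (DX : Diversity X) (DY : Diversity Y)
    (hXs : DX.SeparableD) (hXc : DX.CompleteD)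
    (hYs : DY.SeparableD) (hYc : DY.CompleteD)
    (hXe : DX.ExtensionProp) (hYe : DY.ExtensionProp) :
    ∃ φ : X → Y, Function.Bijective φ ∧ ∀ A : Finset X, DY.δ (A.image φ) = DX.δ A := by
  classical
  open AuxDiv in
  obtain ⟨u, hu⟩ := dense_seq DX hXs (nonempty_of_ext DX hXe)
  obtain ⟨v, hv⟩ := dense_seq DY hYs (nonempty_of_ext DY hYe)
  have hypY : HypY DX DY := fun n p q hpq x => step_exists DX DY hYe p q hpq x
  have hypX : HypY DY DX := fun n q p hqp y => step_exists DY DX hXe q p hqp y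
  set a : ℕ → X := aD DX DY hypY hypX u v with ha
  set b : ℕ → Y := bD DX DY hypY hypX u v with hb
  have hinv : ∀ A : Finset ℕ, DY.δ (A.image b) = DX.δ (A.image a) :=
    inv_nat DX DY hypY hypX u v
  have hpairXY : ∀ m n : ℕ, DY.δ {b m, b n} = DX.δ {a m, a n} := by
    intro m n
    have h := hinv {m, n}
    have e1 : ({m, n} : Finset ℕ).image b = {b m, b n} := by simp
    have e2 : ({m, n} : Finset ℕ).image a = {a m, a n} := by simp
    rw [e1, e2] at h
    exact h
  have hdenseX : ∀ x : X, ∀ ε : ℝ, 0 < ε → ∃ m, DX.δ {x, a m} < ε := by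
    intro x ε hε
    obtain ⟨k, hk⟩ := hu x ε hε
    refine ⟨2 * k, ?_⟩
    rw [ha, aD_even]
    exact hk
  have hdenseY : ∀ y : Y, ∀ ε : ℝ, 0 < ε → ∃ m, DY.δ {y, b m} < ε := by
    intro y ε hε
    obtain ⟨k, hk⟩ := hv y ε hε
    refine ⟨2 * k + 1, ?_⟩
    rw [hb, bD_odd]
    exact hk
  obtain ⟨φ, hφ⟩ := exists_map DX DY hYc a b hpairXY hdenseX
  obtain ⟨ψ, hψ⟩ := exists_map DY DX hXc b a (fun m n => (hpairXY m n).symm) hdenseY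
  have happrox : ∀ x : X, ∀ ε : ℝ, 0 < ε →
      ∃ m, DX.δ {x, a m} < ε ∧ DY.δ {φ x, b m} < ε := by
    intro x ε hε
    obtain ⟨m, hm⟩ := hdenseX x ε hε
    exact ⟨m, hm, lt_of_le_of_lt (hφ x m) hm⟩
  -- main transfer for tuples
  have hmain_tuple : ∀ (n : ℕ) (t : Fin n → X),
      DY.δ (Finset.univ.image (fun i => φ (t i))) = DX.δ (Finset.univ.image t) := by
    intro n t
    have key : ∀ ε : ℝ, 0 < ε →
        |DY.δ (Finset.univ.image (fun i => φ (t i))) - DX.δ (Finset.univ.image t)|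
          ≤ (2 * n) * ε := by
      intro ε hε
      have hsel : ∀ i : Fin n, ∃ m, DX.δ {t i, a m} < ε ∧ DY.δ {φ (t i), b m} < ε :=
        fun i => happrox (t i) ε hε
      choose m hm1 hm2 using hsel
      have hX1 : |DX.δ (Finset.univ.image t) - DX.δ (Finset.univ.image (fun i => a (m i)))|
          ≤ n * ε := by
        have h := perturb DX n t (fun i => a (m i)) ∅ ε (fun i => le_of_lt (hm1 i))
        rwa [Finset.empty_union, Finset.empty_union] at h
      have hY1 : |DY.δ (Finset.univ.image (fun i => φ (t i)))
          - DY.δ (Finset.univ.image (fun i => b (m i)))| ≤ n * ε := by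
        have h := perturb DY n (fun i => φ (t i)) (fun i => b (m i)) ∅ ε
          (fun i => le_of_lt (hm2 i))
        rwa [Finset.empty_union, Finset.empty_union] at h
      have hmid : DY.δ (Finset.univ.image (fun i => b (m i)))
          = DX.δ (Finset.univ.image (fun i => a (m i))) := by
        have e1 : Finset.univ.image (fun i : Fin n => b (m i))
            = (Finset.univ.image m).image b := by
          rw [Finset.image_image]; rfl
        have e2 : Finset.univ.image (fun i : Fin n => a (m i))
            = (Finset.univ.image m).image a := by
          rw [Finset.image_image]; rfl
        rw [e1, e2]
        exact hinv (Finset.univ.image m)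
      calc |DY.δ (Finset.univ.image (fun i => φ (t i))) - DX.δ (Finset.univ.image t)|
          ≤ |DY.δ (Finset.univ.image (fun i => φ (t i)))
              - DY.δ (Finset.univ.image (fun i => b (m i)))|
            + |DY.δ (Finset.univ.image (fun i => b (m i)))
              - DX.δ (Finset.univ.image t)| := abs_sub_le _ _ _
        _ ≤ n * ε + n * ε := by
            refine add_le_add hY1 ?_
            rw [hmid]
            rw [abs_sub_comm]
            exact hX1
        _ = (2 * n) * ε := by ring
    have habs : |DY.δ (Finset.univ.image (fun i => φ (t i)))
        - DX.δ (Finset.univ.image t)| ≤ 0 := by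
      refine le_of_forall_pos_le_add (fun ε hε => ?_)
      have hpos : (0 : ℝ) < ε / (2 * n + 1) := by positivity
      have h := key (ε / (2 * n + 1)) hpos
      have h2 : (2 * (n : ℝ)) * (ε / (2 * n + 1)) ≤ ε := by
        rw [mul_div_assoc', div_le_iff₀ (by positivity)]
        nlinarith [le_of_lt hε]
      linarith
    have hz := abs_eq_zero.mp (le_antisymm habs (abs_nonneg _))
    linarith [hz]
  -- Finset version
  have hmain : ∀ A : Finset X, DY.δ (A.image φ) = DX.δ A := by
    intro A
    obtain ⟨n, t, h1⟩ : ∃ (n : ℕ) (t : Fin n → X), Finset.univ.image t = A := by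
      refine ⟨A.card, fun i => ((A.equivFin.symm i : A) : X), ?_⟩
      ext z
      constructor
      · intro hz
        obtain ⟨i, -, rfl⟩ := Finset.mem_image.mp hz
        exact (A.equivFin.symm i).2
      · intro hz
        refine Finset.mem_image.mpr ⟨A.equivFin ⟨z, hz⟩, Finset.mem_univ _, ?_⟩
        simp
    rw [← h1, Finset.image_image]
    exact hmain_tuple n t
  -- pairs are preserved
  have hpairφ : ∀ x x' : X, DY.δ {φ x, φ x'} = DX.δ {x, x'} := by
    intro x x'
    have h := hmain {x, x'}
    have e : ({x, x'} : Finset X).image φ = {φ x, φ x'} := by simp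
    rw [e] at h
    exact h
  refine ⟨φ, ⟨?_, ?_⟩, hmain⟩
  · -- injective
    intro x x' hxx
    have h := hpairφ x x'
    rw [hxx] at h
    have h0 : DY.δ {φ x', φ x'} = 0 := (pair_eq_zero DY).mpr rfl
    exact (pair_eq_zero DX).mp (by rw [← h, h0])
  · -- surjective
    intro y
    refine ⟨ψ y, ?_⟩
    have hlt : ∀ ε : ℝ, 0 < ε → DY.δ {φ (ψ y), y} < ε := by
      intro ε hε
      obtain ⟨m, hm⟩ := hdenseY y (ε / 2) (by positivity)
      have h1 : DY.δ {φ (ψ y), b m} ≤ DX.δ {ψ y, a m} := hφ (ψ y) m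
      have h2 : DX.δ {ψ y, a m} ≤ DY.δ {y, b m} := hψ y m
      have h3 : DY.δ {φ (ψ y), y} ≤ DY.δ {φ (ψ y), b m} + DY.δ {b m, y} := tri3 DY _ _ _
      rw [pair_comm DY (b m) y] at h3
      linarith
    have h0 : DY.δ {φ (ψ y), y} ≤ 0 := by
      refine le_of_forall_pos_le_add (fun ε hε => ?_)
      have := hlt ε hε
      linarith
    exact (pair_eq_zero DY).mp (le_antisymm h0 (DY.nonneg _))
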